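/- Plemelj-type jump identity in the upper/lower half-plane: for f : ℝ → ℂ continuous and integrable, define F(ζ) = (1/(2πj)) ∫_ℝ f(λ)/(λ − ζ) dλ for ζ ∉ ℝ. Then for fixed x ∈ ℝ at which f is Hölder continuous, lim_{ε→0⁺} [F(x + jε) − F(x − jε)] = f(x). -/

import Mathlib

open Complex Filter MeasureTheory Bornology Topology

private lemma plemelj_pointwise (t x ε : ℝ) (hε : 0 < ε) (c : ℂ) :
    (2 * Real.pi * I)⁻¹ * (c / ((t:ℂ) - ((x:ℂ) + ε*I)) - c / ((t:ℂ) - ((x:ℂ) - ε*I)))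
      = ((ε⁻¹ ^ 1 * ((Real.pi)⁻¹ * (1 + (ε⁻¹ • (x - t)) ^ 2)⁻¹)) : ℝ) • c := by
  have hd1 : ((t:ℂ) - ((x:ℂ) + ε*I)) ≠ 0 := by
    intro h; have := congrArg Complex.im h; simp at this; exact hε.ne' this
  have hd2 : ((t:ℂ) - ((x:ℂ) - ε*I)) ≠ 0 := by
    intro h; have := congrArg Complex.im h; simp at this; exact hε.ne' this
  have hπ : (Real.pi : ℂ) ≠ 0 := by exact_mod_cast Real.pi_ne_zero
  have hεc : (ε : ℂ) ≠ 0 := by exact_mod_cast hε.ne'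
  have hq : (0:ℝ) < (x - t) ^ 2 + ε ^ 2 := by positivity
  have hD : (((x:ℂ)) - t) ^ 2 + (ε:ℂ) ^ 2 ≠ 0 := by
    intro h
    have h2 : (((x - t) ^ 2 + ε ^ 2 : ℝ) : ℂ) = 0 := by push_cast; rw [← h]
    exact hq.ne' (by exact_mod_cast h2)
  have h1 : c / ((t:ℂ) - ((x:ℂ) + ε*I)) - c / ((t:ℂ) - ((x:ℂ) - ε*I))
      = (2 * ε * I * c) / ((((t:ℂ) - ((x:ℂ) + ε*I))) * (((t:ℂ) - ((x:ℂ) - ε*I)))) := by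
    rw [div_sub_div _ _ hd1 hd2]; congr 1; ring
  have h2 : (((t:ℂ) - ((x:ℂ) + ε*I))) * (((t:ℂ) - ((x:ℂ) - ε*I)))
      = ((x:ℂ) - t) ^ 2 + (ε:ℂ) ^ 2 := by
    linear_combination (-(ε:ℂ)^2) * Complex.I_sq
  have hq1 : (1:ℝ) + (ε⁻¹ • (x - t)) ^ 2 = ((x-t)^2 + ε^2) / ε^2 := by
    rw [smul_eq_mul]; field_simp; ring
  rw [h1, h2, Complex.real_smul, hq1, pow_one]
  push_cast
  rw [mul_inv, mul_inv, Complex.inv_I]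
  field_simp
  ring_nf
  simp only [Complex.I_sq]; ring

/-- Plemelj jump identity: for `f : ℝ → ℂ` continuous, integrable, and Hölder
continuous at `x`, the Cauchy transform `F(ζ) = (2πj)⁻¹ ∫ f(λ)/(λ − ζ) dλ` satisfies
`lim_{ε→0⁺} (F(x + jε) − F(x − jε)) = f(x)`. -/
theorem plemelj_jump (f : ℝ → ℂ) (hf_int : Integrable f) (hf_cont : Continuous f)
    (x : ℝ)
    (hHolder : ∃ K α δ : ℝ, 0 < K ∧ 0 < α ∧ α ≤ 1 ∧ 0 < δ ∧
      ∀ t : ℝ, |t - x| < δ → ‖f t - f x‖ ≤ K * |t - x| ^ α)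
    (F : ℂ → ℂ)
    (hF : ∀ ζ : ℂ, ζ.im ≠ 0 →
      F ζ = (2 * Real.pi * I)⁻¹ * ∫ t : ℝ, f t / ((t : ℂ) - ζ)) :
    Tendsto (fun ε : ℝ => F ((x : ℂ) + ε * I) - F ((x : ℂ) - ε * I))
      (nhdsWithin 0 (Set.Ioi 0)) (nhds (f x)) := by
  -- Poisson kernel profile
  set φ : ℝ → ℝ := fun u => (Real.pi)⁻¹ * (1 + u ^ 2)⁻¹ with hφdef
  have hφ : ∀ u, 0 ≤ φ u := fun u => by positivity
  have h'φ : ∫ u : ℝ, φ u = 1 := by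
    simp only [hφdef]
    rw [MeasureTheory.integral_const_mul, integral_univ_inv_one_add_sq,
      inv_mul_cancel₀ Real.pi_ne_zero]
  have hfr : Module.finrank ℝ ℝ = 1 := Module.finrank_self ℝ
  have hdecay : Tendsto (fun u : ℝ => ‖u‖ ^ Module.finrank ℝ ℝ * φ u) (cobounded ℝ) (𝓝 0) := by
    rw [hfr]
    simp only [pow_one, hφdef]
    apply squeeze_zero' (g := fun u : ℝ => (Real.pi)⁻¹ * ‖u‖⁻¹)
    · exact Eventually.of_forall fun u => by positivity
    · filter_upwards [tendsto_norm_cobounded_atTop.eventually_ge_atTop 1] with u hu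
      have hu0 : (0:ℝ) < |u| := lt_of_lt_of_le one_pos (by simpa using hu)
      rw [Real.norm_eq_abs]
      have key : |u| * (1 + u ^ 2)⁻¹ ≤ |u|⁻¹ := by
        rw [mul_inv_le_iff₀ (by positivity), inv_mul_eq_div, le_div_iff₀ hu0]
        nlinarith [abs_mul_abs_self u, _root_.sq_abs u]
      calc |u| * (Real.pi⁻¹ * (1 + u ^ 2)⁻¹) = Real.pi⁻¹ * (|u| * (1 + u ^ 2)⁻¹) := by ring
        _ ≤ Real.pi⁻¹ * |u|⁻¹ := by
            exact mul_le_mul_of_nonneg_left key (by positivity)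
        _ = Real.pi⁻¹ * ‖u‖⁻¹ := by rw [Real.norm_eq_abs]
    · have hn : Tendsto (fun u : ℝ => ‖u‖) (cobounded ℝ) atTop :=
        tendsto_norm_cobounded_atTop
      have := (tendsto_inv_atTop_zero.comp hn).const_mul ((Real.pi)⁻¹ : ℝ)
      simpa using this
  have peak := tendsto_integral_comp_smul_smul_of_integrable' (μ := volume)
    hφ h'φ hdecay hf_int (hf_cont.continuousAt (x := x))
  have comp := peak.comp tendsto_inv_nhdsGT_zero
  -- integrability of the Cauchy integrand
  have hInt : ∀ ζ : ℂ, ζ.im ≠ 0 → Integrable (fun t : ℝ => f t / ((t : ℂ) - ζ)) := by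
    intro ζ hζ
    have hne : ∀ t : ℝ, ((t : ℂ) - ζ) ≠ 0 := by
      intro t h
      have := congrArg Complex.im h
      simp at this
      exact hζ this
    have hcont : Continuous fun t : ℝ => ((t : ℂ) - ζ)⁻¹ :=
      (Complex.continuous_ofReal.sub continuous_const).inv₀ hne
    have hbd : ∀ t : ℝ, ‖((t : ℂ) - ζ)⁻¹‖ ≤ |ζ.im|⁻¹ := by
      intro t
      rw [norm_inv]
      apply inv_anti₀ (abs_pos.2 hζ)
      calc |ζ.im| = |((t:ℂ) - ζ).im| := by simp
        _ ≤ ‖(t:ℂ) - ζ‖ := Complex.abs_im_le_norm _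
    have := hf_int.bdd_mul (c := |ζ.im|⁻¹) hcont.aestronglyMeasurable (Eventually.of_forall hbd)
    exact this.congr (Eventually.of_forall fun t => by
      simp [Pi.mul_apply, div_eq_inv_mul])
  -- the key identity
  have key : ∀ ε : ℝ, ε ∈ Set.Ioi (0:ℝ) →
      F ((x : ℂ) + ε * I) - F ((x : ℂ) - ε * I)
        = ∫ t : ℝ, ((ε⁻¹ : ℝ) ^ Module.finrank ℝ ℝ * φ (ε⁻¹ • (x - t))) • f t := by
    intro ε hε
    rw [Set.mem_Ioi] at hε
    have him1 : ((x : ℂ) + ε * I).im ≠ 0 := by simp [hε.ne']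
    have him2 : ((x : ℂ) - ε * I).im ≠ 0 := by
      simp only [Complex.sub_im, Complex.ofReal_im, Complex.mul_im, Complex.ofReal_re,
        Complex.I_im, Complex.I_re, mul_zero, mul_one, zero_sub, add_zero, neg_eq_zero]
      simpa using hε.ne'
    rw [hF _ him1, hF _ him2, ← mul_sub, ← integral_sub (hInt _ him1) (hInt _ him2),
      ← MeasureTheory.integral_const_mul]
    refine integral_congr_ae (Eventually.of_forall fun t => ?_)
    rw [hfr]
    exact plemelj_pointwise t x ε hε (f t)
  refine comp.congr' ?_
  filter_upwards [self_mem_nhdsWithin] with ε hε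
  exact (key ε hε).symm
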